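/- Let f : [0,1] → ℝ. (1) If f is increasing on [0,1] and is convex (or concave) on [0,1], then the sequence L_n(f) is increasing in n and the sequence R_n(f) is decreasing in n. (2) If f is decreasing on [0,1] and is convex (or concave) on [0,1], then L_n(f) is decreasing in n and R_n(f) is increasing in n. -/

import Mathlib

open Finset

/-- Left Riemann sum of `f` over the uniform partition of `[0,1]` into `n` parts. -/
noncomputable def riemannL (f : ℝ → ℝ) (n : ℕ) : ℝ :=
  (1 / (n : ℝ)) * ∑ k ∈ Finset.range n, f ((k : ℝ) / (n : ℝ))

/-- Right Riemann sum of `f` over the uniform partition of `[0,1]` into `n` parts. -/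
noncomputable def riemannR (f : ℝ → ℝ) (n : ℕ) : ℝ :=
  (1 / (n : ℝ)) * ∑ k ∈ Finset.Icc 1 n, f ((k : ℝ) / (n : ℝ))

lemma mem_unit' {x y : ℝ} (hx : 0 ≤ x) (hxy : x ≤ y) (hy : 0 < y) :
    x / y ∈ Set.Icc (0:ℝ) 1 := by
  constructor
  · positivity
  · rw [div_le_one hy]; exact hxy

lemma riemannR_eq (f : ℝ → ℝ) (n : ℕ) :
    riemannR f n = (1/(n:ℝ)) * ∑ k ∈ Finset.range n, f (((k:ℝ)+1)/(n:ℝ)) := by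
  unfold riemannR
  congr 1
  rw [← Finset.Ico_add_one_right_eq_Icc, Finset.sum_Ico_eq_sum_range]
  simp only [Nat.add_sub_cancel]
  refine Finset.sum_congr rfl fun k _ => ?_
  congr 1
  push_cast
  ring

lemma lemA (f : ℝ → ℝ)
    (hconv : ConvexOn ℝ (Set.Icc (0:ℝ) 1) f ∨ ConcaveOn ℝ (Set.Icc (0:ℝ) 1) f)
    (hmono : MonotoneOn f (Set.Icc (0:ℝ) 1)) (n : ℕ) (hn : 1 ≤ n) :
    riemannL f n ≤ riemannL f (n + 1) := by
  have hn0 : (0:ℝ) < n := by exact_mod_cast hn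
  have hn1 : (0:ℝ) < (n:ℝ) + 1 := by positivity
  unfold riemannL
  push_cast
  rw [one_div_mul_eq_div, one_div_mul_eq_div, div_le_div_iff₀ hn0 hn1]
  rcases hconv with hc | hc
  · -- convex case
    have key : ∀ k ∈ range n, (n:ℝ) * f ((k:ℝ)/(n:ℝ)) ≤
        ((n:ℝ) - (k:ℝ)) * f ((k:ℝ)/((n:ℝ)+1)) + (k:ℝ) * f (((k:ℝ)+1)/((n:ℝ)+1)) := by
      intro k hk
      have hkn : k < n := mem_range.mp hk
      have hk' : (k:ℝ) ≤ (n:ℝ) := by exact_mod_cast hkn.le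
      have hk0 : (0:ℝ) ≤ k := Nat.cast_nonneg k
      have m1 : (k:ℝ)/((n:ℝ)+1) ∈ Set.Icc (0:ℝ) 1 := mem_unit' hk0 (by linarith) hn1
      have m2 : ((k:ℝ)+1)/((n:ℝ)+1) ∈ Set.Icc (0:ℝ) 1 := mem_unit' (by linarith) (by linarith) hn1
      have ha : (0:ℝ) ≤ ((n:ℝ)-(k:ℝ))/(n:ℝ) := div_nonneg (by linarith) hn0.le
      have hb : (0:ℝ) ≤ (k:ℝ)/(n:ℝ) := div_nonneg hk0 hn0.le
      have hab : ((n:ℝ)-(k:ℝ))/(n:ℝ) + (k:ℝ)/(n:ℝ) = 1 := by field_simp; ring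
      have h := hc.2 m1 m2 ha hb hab
      simp only [smul_eq_mul] at h
      have e : ((n:ℝ)-(k:ℝ))/(n:ℝ) * ((k:ℝ)/((n:ℝ)+1)) + (k:ℝ)/(n:ℝ) * (((k:ℝ)+1)/((n:ℝ)+1))
          = (k:ℝ)/(n:ℝ) := by field_simp; ring
      rw [e] at h
      have h2 := mul_le_mul_of_nonneg_left h hn0.le
      calc (n:ℝ) * f ((k:ℝ)/(n:ℝ))
          ≤ (n:ℝ) * (((n:ℝ)-(k:ℝ))/(n:ℝ) * f ((k:ℝ)/((n:ℝ)+1)) + (k:ℝ)/(n:ℝ) * f (((k:ℝ)+1)/((n:ℝ)+1))) := h2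
        _ = ((n:ℝ) - (k:ℝ)) * f ((k:ℝ)/((n:ℝ)+1)) + (k:ℝ) * f (((k:ℝ)+1)/((n:ℝ)+1)) := by
            field_simp
    have keym : ∀ k ∈ range n, f ((k:ℝ)/(n:ℝ)) ≤ f (((k:ℝ)+1)/((n:ℝ)+1)) := by
      intro k hk
      have hkn : k < n := mem_range.mp hk
      have hk' : (k:ℝ) ≤ (n:ℝ) := by exact_mod_cast hkn.le
      have hk0 : (0:ℝ) ≤ k := Nat.cast_nonneg k
      refine hmono (mem_unit' hk0 hk' hn0) (mem_unit' (by linarith) (by linarith) hn1) ?_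
      rw [div_le_div_iff₀ hn0 hn1]
      nlinarith
    have h1 : (n:ℝ) * ∑ k ∈ range n, f ((k:ℝ)/(n:ℝ)) ≤
        ∑ k ∈ range n, (((n:ℝ) - (k:ℝ)) * f ((k:ℝ)/((n:ℝ)+1)) + (k:ℝ) * f (((k:ℝ)+1)/((n:ℝ)+1))) := by
      rw [Finset.mul_sum]; exact Finset.sum_le_sum key
    have h2 : ∑ k ∈ range n, f ((k:ℝ)/(n:ℝ)) ≤ ∑ k ∈ range n, f (((k:ℝ)+1)/((n:ℝ)+1)) :=
      Finset.sum_le_sum keym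
    have e1 : ∑ k ∈ range (n+1), (((n:ℝ) - (k:ℝ)) * f ((k:ℝ)/((n:ℝ)+1)))
        = ∑ k ∈ range n, (((n:ℝ) - (k:ℝ)) * f ((k:ℝ)/((n:ℝ)+1))) := by
      rw [Finset.sum_range_succ]; simp
    have e2 : ∑ k ∈ range (n+1), ((k:ℝ) * f ((k:ℝ)/((n:ℝ)+1)))
        = ∑ k ∈ range n, (((k:ℝ)+1) * f (((k:ℝ)+1)/((n:ℝ)+1))) := by
      rw [Finset.sum_range_succ']
      push_cast
      simp
    have hB : (∑ k ∈ range (n+1), f ((k:ℝ)/((n:ℝ)+1))) * (n:ℝ)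
        = ∑ k ∈ range (n+1), (((n:ℝ) - (k:ℝ)) * f ((k:ℝ)/((n:ℝ)+1)))
          + ∑ k ∈ range (n+1), ((k:ℝ) * f ((k:ℝ)/((n:ℝ)+1))) := by
      rw [← Finset.sum_add_distrib, Finset.sum_mul]
      exact Finset.sum_congr rfl fun k _ => by ring
    have hfin : (∑ k ∈ range n, (((n:ℝ) - (k:ℝ)) * f ((k:ℝ)/((n:ℝ)+1)) + (k:ℝ) * f (((k:ℝ)+1)/((n:ℝ)+1))))
        + ∑ k ∈ range n, f (((k:ℝ)+1)/((n:ℝ)+1))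
        = (∑ k ∈ range (n+1), f ((k:ℝ)/((n:ℝ)+1))) * (n:ℝ) := by
      rw [hB, e1, e2, Finset.sum_add_distrib, add_assoc]
      congr 1
      rw [← Finset.sum_add_distrib]
      exact Finset.sum_congr rfl fun k _ => by ring
    calc (∑ k ∈ range n, f ((k:ℝ)/(n:ℝ))) * ((n:ℝ)+1)
        = (n:ℝ) * (∑ k ∈ range n, f ((k:ℝ)/(n:ℝ))) + ∑ k ∈ range n, f ((k:ℝ)/(n:ℝ)) := by ring
      _ ≤ (∑ k ∈ range n, (((n:ℝ) - (k:ℝ)) * f ((k:ℝ)/((n:ℝ)+1)) + (k:ℝ) * f (((k:ℝ)+1)/((n:ℝ)+1))))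
          + ∑ k ∈ range n, f (((k:ℝ)+1)/((n:ℝ)+1)) := add_le_add h1 h2
      _ = (∑ k ∈ range (n+1), f ((k:ℝ)/((n:ℝ)+1))) * (n:ℝ) := hfin
  · -- concave case
    have key : ∀ k ∈ range n, ((k:ℝ)+1) * f ((k:ℝ)/(n:ℝ)) + ((n:ℝ) - (k:ℝ)) * f (((k:ℝ)+1)/(n:ℝ))
        ≤ ((n:ℝ)+1) * f (((k:ℝ)+1)/((n:ℝ)+1)) := by
      intro k hk
      have hkn : k < n := mem_range.mp hk
      have hk' : (k:ℝ) ≤ (n:ℝ) := by exact_mod_cast hkn.le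
      have hk'' : (k:ℝ)+1 ≤ (n:ℝ) := by exact_mod_cast hkn
      have hk0 : (0:ℝ) ≤ k := Nat.cast_nonneg k
      have m1 : (k:ℝ)/(n:ℝ) ∈ Set.Icc (0:ℝ) 1 := mem_unit' hk0 hk' hn0
      have m2 : ((k:ℝ)+1)/(n:ℝ) ∈ Set.Icc (0:ℝ) 1 := mem_unit' (by linarith) (by linarith) hn0
      have ha : (0:ℝ) ≤ ((k:ℝ)+1)/((n:ℝ)+1) := div_nonneg (by linarith) hn1.le
      have hb : (0:ℝ) ≤ ((n:ℝ)-(k:ℝ))/((n:ℝ)+1) := div_nonneg (by linarith) hn1.le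
      have hab : ((k:ℝ)+1)/((n:ℝ)+1) + ((n:ℝ)-(k:ℝ))/((n:ℝ)+1) = 1 := by field_simp; ring
      have h := hc.2 m1 m2 ha hb hab
      simp only [smul_eq_mul] at h
      have e : ((k:ℝ)+1)/((n:ℝ)+1) * ((k:ℝ)/(n:ℝ)) + ((n:ℝ)-(k:ℝ))/((n:ℝ)+1) * (((k:ℝ)+1)/(n:ℝ))
          = ((k:ℝ)+1)/((n:ℝ)+1) := by field_simp; ring
      rw [e] at h
      have h2 := mul_le_mul_of_nonneg_left h hn1.le
      calc ((k:ℝ)+1) * f ((k:ℝ)/(n:ℝ)) + ((n:ℝ) - (k:ℝ)) * f (((k:ℝ)+1)/(n:ℝ))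
          = ((n:ℝ)+1) * (((k:ℝ)+1)/((n:ℝ)+1) * f ((k:ℝ)/(n:ℝ))
              + ((n:ℝ)-(k:ℝ))/((n:ℝ)+1) * f (((k:ℝ)+1)/(n:ℝ))) := by field_simp
        _ ≤ ((n:ℝ)+1) * f (((k:ℝ)+1)/((n:ℝ)+1)) := h2
    have keym : ∀ k ∈ range n, f ((k:ℝ)/(n:ℝ)) ≤ f 1 := by
      intro k hk
      have hkn : k < n := mem_range.mp hk
      have hk' : (k:ℝ) ≤ (n:ℝ) := by exact_mod_cast hkn.le
      have hk0 : (0:ℝ) ≤ k := Nat.cast_nonneg k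
      refine hmono (mem_unit' hk0 hk' hn0) (by norm_num) ?_
      rw [div_le_one hn0]; exact hk'
    -- S := ∑ k ∈ range n, f ((k+1)/(n+1)), B = S + f 0
    have hBS : ∑ k ∈ range (n+1), f ((k:ℝ)/((n:ℝ)+1))
        = (∑ k ∈ range n, f (((k:ℝ)+1)/((n:ℝ)+1))) + f 0 := by
      rw [Finset.sum_range_succ']
      push_cast
      simp
    have hS : ∑ k ∈ range n, (((k:ℝ)+1) * f ((k:ℝ)/(n:ℝ)) + ((n:ℝ) - (k:ℝ)) * f (((k:ℝ)+1)/(n:ℝ)))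
        ≤ ((n:ℝ)+1) * ∑ k ∈ range n, f (((k:ℝ)+1)/((n:ℝ)+1)) := by
      rw [Finset.mul_sum]; exact Finset.sum_le_sum key
    -- compute D
    have hshift : ∑ k ∈ range n, (((n:ℝ) - (k:ℝ)) * f (((k:ℝ)+1)/(n:ℝ)))
        = ∑ k ∈ range (n+1), (((n:ℝ) + 1 - k) * f ((k:ℝ)/(n:ℝ))) - ((n:ℝ)+1) * f 0 := by
      rw [Finset.sum_range_succ']
      push_cast
      simp only [Nat.cast_zero, zero_div, sub_zero]
      ring_nf
      rw [Finset.sum_congr rfl (fun k _ => ?_)]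
      push_cast
      ring_nf
    have hsplit : ∑ k ∈ range (n+1), (((n:ℝ)+1-(k:ℝ)) * f ((k:ℝ)/(n:ℝ)))
        = (∑ k ∈ range n, (((n:ℝ)+1-(k:ℝ)) * f ((k:ℝ)/(n:ℝ)))) + f 1 := by
      rw [Finset.sum_range_succ]
      congr 1
      rw [div_self hn0.ne']
      ring
    have hD : ∑ k ∈ range n, (((k:ℝ)+1) * f ((k:ℝ)/(n:ℝ)) + ((n:ℝ) - (k:ℝ)) * f (((k:ℝ)+1)/(n:ℝ)))
        = ((n:ℝ)+2) * (∑ k ∈ range n, f ((k:ℝ)/(n:ℝ))) + f 1 - ((n:ℝ)+1) * f 0 := by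
      rw [Finset.sum_add_distrib, hshift, hsplit]
      have hcomb : ∑ k ∈ range n, (((k:ℝ)+1) * f ((k:ℝ)/(n:ℝ)))
          + ∑ k ∈ range n, (((n:ℝ)+1-(k:ℝ)) * f ((k:ℝ)/(n:ℝ)))
          = ((n:ℝ)+2) * ∑ k ∈ range n, f ((k:ℝ)/(n:ℝ)) := by
        rw [← Finset.sum_add_distrib, Finset.mul_sum]
        exact Finset.sum_congr rfl fun k _ => by ring
      linarith [hcomb]
    have hA1 : ∑ k ∈ range n, f ((k:ℝ)/(n:ℝ)) ≤ (n:ℝ) * f 1 := by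
      calc ∑ k ∈ range n, f ((k:ℝ)/(n:ℝ)) ≤ ∑ _k ∈ range n, f 1 := Finset.sum_le_sum keym
        _ = (n:ℝ) * f 1 := by rw [Finset.sum_const, card_range]; simp [nsmul_eq_mul]
    have hDS : ((n:ℝ)+2) * (∑ k ∈ range n, f ((k:ℝ)/(n:ℝ))) + f 1 - ((n:ℝ)+1) * f 0
        ≤ ((n:ℝ)+1) * ∑ k ∈ range n, f (((k:ℝ)+1)/((n:ℝ)+1)) := hD ▸ hS
    rw [hBS]
    nlinarith [mul_le_mul_of_nonneg_left hDS hn0.le, hA1, hn1, hn0]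
  

lemma riemannL_neg (f : ℝ → ℝ) (n : ℕ) :
    riemannL (fun x => -f x) n = - riemannL f n := by
  simp [riemannL, Finset.sum_neg_distrib]

lemma riemannR_neg (f : ℝ → ℝ) (n : ℕ) :
    riemannR (fun x => -f x) n = - riemannR f n := by
  simp [riemannR, Finset.sum_neg_distrib]

lemma riemannR_reflect (f : ℝ → ℝ) (n : ℕ) :
    riemannR f n = - riemannL (fun x => -f (1 - x)) n := by
  rw [riemannR_eq]
  unfold riemannL
  rw [Finset.sum_neg_distrib, mul_neg, neg_neg]
  rcases Nat.eq_zero_or_pos n with h0 | hpos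
  · subst h0; simp
  have hn0 : (0:ℝ) < n := by exact_mod_cast hpos
  congr 1
  rw [← Finset.sum_range_reflect (fun k => f (((k:ℝ)+1)/(n:ℝ))) n]
  refine Finset.sum_congr rfl fun j hj => ?_
  have hj' : j < n := mem_range.mp hj
  congr 1
  rw [Nat.sub_sub, Nat.cast_sub (by omega : 1 + j ≤ n)]
  push_cast
  field_simp
  ring

lemma mono_reflect {f : ℝ → ℝ} (hmono : MonotoneOn f (Set.Icc (0:ℝ) 1)) :
    MonotoneOn (fun x => -f (1 - x)) (Set.Icc (0:ℝ) 1) := by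
  intro x hx y hy hxy
  simp only [Set.mem_Icc] at hx hy
  have h1y : (1:ℝ) - y ∈ Set.Icc (0:ℝ) 1 := by constructor <;> [linarith; linarith]
  have h1x : (1:ℝ) - x ∈ Set.Icc (0:ℝ) 1 := by constructor <;> [linarith; linarith]
  have := hmono h1y h1x (by linarith)
  simp only
  linarith

lemma conv_reflect {f : ℝ → ℝ} (h : ConvexOn ℝ (Set.Icc (0:ℝ) 1) f) :
    ConcaveOn ℝ (Set.Icc (0:ℝ) 1) (fun x => -f (1 - x)) := by
  refine ⟨convex_Icc 0 1, ?_⟩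
  intro x hx y hy a b ha hb hab
  simp only [smul_eq_mul, Set.mem_Icc] at hx hy ⊢
  have h1x : (1:ℝ) - x ∈ Set.Icc (0:ℝ) 1 := by constructor <;> [linarith [hx.2]; linarith [hx.1]]
  have h1y : (1:ℝ) - y ∈ Set.Icc (0:ℝ) 1 := by constructor <;> [linarith [hy.2]; linarith [hy.1]]
  have h2 := h.2 h1x h1y ha hb hab
  simp only [smul_eq_mul] at h2
  have e : a * (1 - x) + b * (1 - y) = 1 - (a * x + b * y) := by linear_combination hab
  rw [e] at h2
  linarith

lemma conc_reflect {f : ℝ → ℝ} (h : ConcaveOn ℝ (Set.Icc (0:ℝ) 1) f) :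
    ConvexOn ℝ (Set.Icc (0:ℝ) 1) (fun x => -f (1 - x)) := by
  refine ⟨convex_Icc 0 1, ?_⟩
  intro x hx y hy a b ha hb hab
  simp only [smul_eq_mul, Set.mem_Icc] at hx hy ⊢
  have h1x : (1:ℝ) - x ∈ Set.Icc (0:ℝ) 1 := by constructor <;> [linarith [hx.2]; linarith [hx.1]]
  have h1y : (1:ℝ) - y ∈ Set.Icc (0:ℝ) 1 := by constructor <;> [linarith [hy.2]; linarith [hy.1]]
  have h2 := h.2 h1x h1y ha hb hab
  simp only [smul_eq_mul] at h2
  have e : a * (1 - x) + b * (1 - y) = 1 - (a * x + b * y) := by linear_combination hab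
  rw [e] at h2
  linarith

lemma lemRdec (f : ℝ → ℝ)
    (hconv : ConvexOn ℝ (Set.Icc (0:ℝ) 1) f ∨ ConcaveOn ℝ (Set.Icc (0:ℝ) 1) f)
    (hmono : MonotoneOn f (Set.Icc (0:ℝ) 1)) (n : ℕ) (hn : 1 ≤ n) :
    riemannR f (n + 1) ≤ riemannR f n := by
  have hg : ConvexOn ℝ (Set.Icc (0:ℝ) 1) (fun x => -f (1 - x)) ∨
      ConcaveOn ℝ (Set.Icc (0:ℝ) 1) (fun x => -f (1 - x)) := by
    rcases hconv with h | h
    · exact Or.inr (conv_reflect h)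
    · exact Or.inl (conc_reflect h)
  have h := lemA _ hg (mono_reflect hmono) n hn
  rw [riemannR_reflect f n, riemannR_reflect f (n+1)]
  linarith

theorem stmt0 (f : ℝ → ℝ)
    (hconv : ConvexOn ℝ (Set.Icc (0:ℝ) 1) f ∨ ConcaveOn ℝ (Set.Icc (0:ℝ) 1) f) :
    (MonotoneOn f (Set.Icc (0:ℝ) 1) →
      (∀ n : ℕ, 1 ≤ n → riemannL f n ≤ riemannL f (n + 1)) ∧
      (∀ n : ℕ, 1 ≤ n → riemannR f (n + 1) ≤ riemannR f n)) ∧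
    (AntitoneOn f (Set.Icc (0:ℝ) 1) →
      (∀ n : ℕ, 1 ≤ n → riemannL f (n + 1) ≤ riemannL f n) ∧
      (∀ n : ℕ, 1 ≤ n → riemannR f n ≤ riemannR f (n + 1))) := by
  constructor
  · intro hmono
    exact ⟨fun n hn => lemA f hconv hmono n hn, fun n hn => lemRdec f hconv hmono n hn⟩
  · intro hanti
    have hmono' : MonotoneOn (fun x => -f x) (Set.Icc (0:ℝ) 1) := hanti.neg
    have hconv' : ConvexOn ℝ (Set.Icc (0:ℝ) 1) (fun x => -f x) ∨
        ConcaveOn ℝ (Set.Icc (0:ℝ) 1) (fun x => -f x) := by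
      rcases hconv with h | h
      · exact Or.inr h.neg
      · exact Or.inl h.neg
    constructor
    · intro n hn
      have := lemA _ hconv' hmono' n hn
      rw [riemannL_neg, riemannL_neg] at this
      linarith
    · intro n hn
      have := lemRdec _ hconv' hmono' n hn
      rw [riemannR_neg, riemannR_neg] at this
      linarith
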